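/- Theorem 1 (first part, 'after' values, unnormalized): Let U be a unitary on H_S⊗H_A commuting with L = L_S⊗1 + 1⊗L_A, let P^x be a projection on H_A commuting with L_A, and let O_S be self-adjoint on H_S commuting with L_S. If the state ρ on H_S commutes with L_S, then for any state ϱ on H_A, tr[(O_S ⊗ P^x) U(ρ⊗ϱ)U†] = tr[(O_S ⊗ P^x) U(ρ⊗Φ_{L_A}(ϱ))U†], where Φ_{L_A}(ϱ) = Σ_μ Q_A^μ ϱ Q_A^μ is the decoherence of ϱ with respect to the spectral projections Q_A^μ of L_A. -/

import Mathlib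

open Matrix BigOperators Kronecker
open scoped ComplexOrder

/-- Kronecker product distributes over finite sums on the right. -/
lemma kronecker_sum_right {l m n p : Type*} {ι : Type*} (s : Finset ι)
    (A : Matrix l m ℂ) (B : ι → Matrix n p ℂ) :
    A ⊗ₖ (∑ i ∈ s, B i) = ∑ i ∈ s, A ⊗ₖ B i := by
  classical
  induction s using Finset.induction_on with
  | empty => simp [Matrix.kronecker_zero]
  | insert _ _ h ih =>
      rw [Finset.sum_insert h, Finset.sum_insert h, Matrix.kronecker_add, ih]

/-- The c-trick: if `A` commutes with `L` and `L*M - M*L = c•M` with `c ≠ 0`,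
then `tr(A*M) = 0`. -/
lemma trace_vanish {n : Type*} [Fintype n] [DecidableEq n]
    (A L M : Matrix n n ℂ) (c : ℂ) (hc : c ≠ 0)
    (hAL : A * L = L * A) (hM : L * M - M * L = c • M) :
    (A * M).trace = 0 := by
  have key : c * (A * M).trace = 0 := by
    have h1 : c * (A * M).trace = (A * (L * M - M * L)).trace := by
      rw [hM, Matrix.mul_smul, Matrix.trace_smul, smul_eq_mul]
    have h2 : (A * (L * M - M * L)).trace
        = (A * L * M).trace - (A * (M * L)).trace := by
      rw [mul_sub, Matrix.trace_sub, mul_assoc]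
    have h3 : (A * (M * L)).trace = (A * L * M).trace := by
      rw [← mul_assoc, Matrix.trace_mul_comm (A * M) L, ← mul_assoc, ← hAL]
    rw [h1, h2, h3, sub_self]
  rcases mul_eq_zero.mp key with h | h
  · exact absurd h hc
  · exact h

/-- Theorem 1, first part, 'after' values, unnormalized:
U unitary commuting with L_S⊗1+1⊗L_A, Pˣ a projection commuting with L_A,
O_S self-adjoint commuting with L_S.  If ρ commutes with L_S, then for any
apparatus state ϱ, tr[(O_S⊗Pˣ)U(ρ⊗ϱ)U†] = tr[(O_S⊗Pˣ)U(ρ⊗Φ_{L_A}(ϱ))U†],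
where Φ_{L_A}(ϱ) = Σ_μ Q_A^μ ϱ Q_A^μ with Q_A^μ the spectral projections of L_A. -/
theorem thm1_after_apparatus_decoherence {dS dA : ℕ} {ιA : Type*} [Fintype ιA] [DecidableEq ιA]
    (LS : Matrix (Fin dS) (Fin dS) ℂ) (hLS : LS.IsHermitian)
    (LA : Matrix (Fin dA) (Fin dA) ℂ) (hLA : LA.IsHermitian)
    (QA : ιA → Matrix (Fin dA) (Fin dA) ℂ)
    (hQAherm : ∀ μ, (QA μ).IsHermitian)
    (hQAorth : ∀ μ ν, QA μ * QA ν = if μ = ν then QA μ else 0)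
    (hQAsum : ∑ μ, QA μ = 1)
    (lamA : ιA → ℝ) (hlamA : Function.Injective lamA)
    (hLAspec : LA = ∑ μ, (lamA μ : ℂ) • QA μ)
    (U : Matrix (Fin dS × Fin dA) (Fin dS × Fin dA) ℂ)
    (hU : U ∈ Matrix.unitaryGroup (Fin dS × Fin dA) ℂ)
    (hUL : U * (LS ⊗ₖ (1 : Matrix (Fin dA) (Fin dA) ℂ)
             + (1 : Matrix (Fin dS) (Fin dS) ℂ) ⊗ₖ LA)
         = (LS ⊗ₖ (1 : Matrix (Fin dA) (Fin dA) ℂ)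
             + (1 : Matrix (Fin dS) (Fin dS) ℂ) ⊗ₖ LA) * U)
    (P : Matrix (Fin dA) (Fin dA) ℂ) (hPproj : P * P = P) (hPherm : P.IsHermitian)
    (hPL : P * LA = LA * P)
    (OS : Matrix (Fin dS) (Fin dS) ℂ) (hOS : OS.IsHermitian) (hOSL : OS * LS = LS * OS)
    (ρ : Matrix (Fin dS) (Fin dS) ℂ) (hρ : ρ.PosSemidef) (hρtr : ρ.trace = 1)
    (hρL : ρ * LS = LS * ρ)
    (ϱ : Matrix (Fin dA) (Fin dA) ℂ) (hϱ : ϱ.PosSemidef) (hϱtr : ϱ.trace = 1) :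
    ((OS ⊗ₖ P) * (U * (ρ ⊗ₖ ϱ) * Uᴴ)).trace
      = ((OS ⊗ₖ P) * (U * (ρ ⊗ₖ (∑ μ, QA μ * ϱ * QA μ)) * Uᴴ)).trace := by
  classical
  set L : Matrix (Fin dS × Fin dA) (Fin dS × Fin dA) ℂ :=
    LS ⊗ₖ (1 : Matrix (Fin dA) (Fin dA) ℂ)
      + (1 : Matrix (Fin dS) (Fin dS) ℂ) ⊗ₖ LA with hLdef
  set A : Matrix (Fin dS × Fin dA) (Fin dS × Fin dA) ℂ := OS ⊗ₖ P with hAdef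
  -- A commutes with L
  have hAL : A * L = L * A := by
    simp only [hAdef, hLdef, mul_add, add_mul, ← Matrix.mul_kronecker_mul,
      Matrix.one_mul, Matrix.mul_one, hOSL, hPL]
  -- U† commutes with L
  have hUU : U * Uᴴ = 1 := by
    simpa [Matrix.star_eq_conjTranspose] using (Matrix.mem_unitaryGroup_iff.mp hU)
  have hUU' : Uᴴ * U = 1 := by
    simpa [Matrix.star_eq_conjTranspose] using (Matrix.mem_unitaryGroup_iff'.mp hU)
  have hULc : Uᴴ * L = L * Uᴴ := by
    calc Uᴴ * L = Uᴴ * L * (U * Uᴴ) := by rw [hUU, mul_one]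
    _ = Uᴴ * (L * U) * Uᴴ := by simp only [mul_assoc]
    _ = Uᴴ * (U * L) * Uᴴ := by rw [hUL]
    _ = L * Uᴴ := by rw [← mul_assoc Uᴴ U L, hUU', one_mul]
  -- eigenrelations for QA
  have hLAQ : ∀ μ, LA * QA μ = (lamA μ : ℂ) • QA μ := by
    intro μ
    rw [hLAspec, Finset.sum_mul]
    rw [Finset.sum_eq_single μ]
    · rw [smul_mul_assoc, hQAorth, if_pos rfl]
    · intro ν _ hνμ
      rw [smul_mul_assoc, hQAorth, if_neg hνμ, smul_zero]
    · intro h; exact absurd (Finset.mem_univ μ) h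
  have hQLA : ∀ μ, QA μ * LA = (lamA μ : ℂ) • QA μ := by
    intro μ
    rw [hLAspec, Finset.mul_sum]
    rw [Finset.sum_eq_single μ]
    · rw [mul_smul_comm, hQAorth, if_pos rfl]
    · intro ν _ hνμ
      rw [mul_smul_comm, hQAorth, if_neg (fun h => hνμ h.symm), smul_zero]
    · intro h; exact absurd (Finset.mem_univ μ) h
  -- the cross terms vanish
  have hcross : ∀ μ ν, μ ≠ ν →
      (A * (U * (ρ ⊗ₖ (QA μ * ϱ * QA ν)) * Uᴴ)).trace = 0 := by
    intro μ ν hμν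
    set T : Matrix (Fin dS × Fin dA) (Fin dS × Fin dA) ℂ :=
      ρ ⊗ₖ (QA μ * ϱ * QA ν) with hTdef
    set c : ℂ := (lamA μ : ℂ) - (lamA ν : ℂ) with hcdef
    have hc : c ≠ 0 := by
      simp only [hcdef, sub_ne_zero]
      exact_mod_cast fun h => hμν (hlamA (by exact_mod_cast h))
    have hLT : L * T - T * L = c • T := by
      have h1 : L * T = ((LS * ρ) ⊗ₖ (QA μ * ϱ * QA ν))
          + (lamA μ : ℂ) • T := by
        rw [hLdef, hTdef, add_mul, ← Matrix.mul_kronecker_mul,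
          ← Matrix.mul_kronecker_mul]
        simp only [Matrix.one_mul, Matrix.mul_one]
        congr 1
        rw [← mul_assoc, ← mul_assoc, hLAQ, smul_mul_assoc, smul_mul_assoc,
          Matrix.kronecker_smul]
      have h2 : T * L = ((ρ * LS) ⊗ₖ (QA μ * ϱ * QA ν))
          + (lamA ν : ℂ) • T := by
        rw [hLdef, hTdef, mul_add, ← Matrix.mul_kronecker_mul,
          ← Matrix.mul_kronecker_mul]
        simp only [Matrix.one_mul, Matrix.mul_one]
        congr 1
        rw [mul_assoc, hQLA, mul_smul_comm, Matrix.kronecker_smul]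
      rw [h1, h2, hρL, hcdef, sub_smul]
      abel
    have hM : L * (U * T * Uᴴ) - (U * T * Uᴴ) * L = c • (U * T * Uᴴ) := by
      have e1 : L * (U * T * Uᴴ) = U * (L * T) * Uᴴ := by
        rw [← mul_assoc, ← mul_assoc, ← hUL, mul_assoc U L T]
      have e2 : (U * T * Uᴴ) * L = U * (T * L) * Uᴴ := by
        rw [mul_assoc, hULc, ← mul_assoc, mul_assoc U T L]
      rw [e1, e2, ← sub_mul, ← mul_sub, hLT, Matrix.mul_smul, Matrix.smul_mul]
    exact trace_vanish A L (U * T * Uᴴ) c hc hAL hM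
  -- expand ϱ = ∑_{μ,ν} QA μ * ϱ * QA ν
  have hϱexp : ϱ = ∑ μ, ∑ ν, QA μ * ϱ * QA ν := by
    calc ϱ = (∑ μ, QA μ) * ϱ * (∑ ν, QA ν) := by rw [hQAsum, one_mul, mul_one]
    _ = ∑ μ, ∑ ν, QA μ * ϱ * QA ν := by
        rw [Finset.sum_mul, Finset.sum_mul]
        exact Finset.sum_congr rfl fun μ _ => Finset.mul_sum _ _ _
  -- LHS = ∑_{μ,ν} t μ ν, RHS = ∑_μ t μ μ
  have hlin : ∀ (f : ιA → ιA → Matrix (Fin dA) (Fin dA) ℂ),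
      (A * (U * (ρ ⊗ₖ (∑ μ, ∑ ν, f μ ν)) * Uᴴ)).trace
        = ∑ μ, ∑ ν, (A * (U * (ρ ⊗ₖ f μ ν) * Uᴴ)).trace := by
    intro f
    rw [kronecker_sum_right]
    simp only [kronecker_sum_right, Finset.mul_sum, Finset.sum_mul, Matrix.trace_sum]
  calc ((OS ⊗ₖ P) * (U * (ρ ⊗ₖ ϱ) * Uᴴ)).trace
      = (A * (U * (ρ ⊗ₖ (∑ μ, ∑ ν, QA μ * ϱ * QA ν)) * Uᴴ)).trace := by
        rw [← hϱexp]
    _ = ∑ μ, ∑ ν, (A * (U * (ρ ⊗ₖ (QA μ * ϱ * QA ν)) * Uᴴ)).trace := hlin _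
    _ = ∑ μ, (A * (U * (ρ ⊗ₖ (QA μ * ϱ * QA μ)) * Uᴴ)).trace := by
        refine Finset.sum_congr rfl fun μ _ => ?_
        rw [Finset.sum_eq_single μ]
        · intro ν _ hνμ
          exact hcross μ ν (fun h => hνμ h.symm)
        · intro h; exact absurd (Finset.mem_univ μ) h
    _ = ((OS ⊗ₖ P) * (U * (ρ ⊗ₖ (∑ μ, QA μ * ϱ * QA μ)) * Uᴴ)).trace := by
        rw [kronecker_sum_right]
        simp only [Finset.mul_sum, Finset.sum_mul, Matrix.trace_sum, hAdef]
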